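/- Let G be a Cohen-Macaulay very well-covered graph with 2n vertices satisfying conditions (∗) and (∗∗), with deg(y_1) = 1 and x_1 y_1 ∈ E(G). If x_t ∈ N_G(x_1), then y_t is an isolated vertex in the induced subgraph G \ ({x_1} ∪ N_G(x_1)). -/
import Mathlib


open Relation

/-- `C` is a vertex cover of `G`. -/
def IsVC {V : Type*} (G : SimpleGraph V) (C : Set V) : Prop :=
  ∀ ⦃u v : V⦄, G.Adj u v → u ∈ C ∨ v ∈ C

/-- `C` is a minimal vertex cover of `G`. -/
def IsMinVC {V : Type*} (G : SimpleGraph V) (C : Set V) : Prop :=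
  IsVC G C ∧ ∀ D : Set V, IsVC G D → D ⊆ C → D = C

/-- `S` is an independent set of `G`. -/
def IsIndep {V : Type*} (G : SimpleGraph V) (S : Set V) : Prop :=
  ∀ u ∈ S, ∀ v ∈ S, ¬ G.Adj u v

/-- `S` is a maximal independent set of `G`. -/
def IsMaxIndep {V : Type*} (G : SimpleGraph V) (S : Set V) : Prop :=
  IsIndep G S ∧ ∀ T : Set V, IsIndep G T → S ⊆ T → T = S

/-- `G` has no isolated vertices. -/
def NoIsolated {V : Type*} (G : SimpleGraph V) : Prop := ∀ v, ∃ w, G.Adj v w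

/-- The vertex set `{x_1,...,x_n} ∪ {y_1,...,y_n}`: `xv i = Sum.inl i`, `yv i = Sum.inr i`. -/
abbrev Vtx (n : ℕ) := Fin n ⊕ Fin n

def xv {n : ℕ} (i : Fin n) : Vtx n := Sum.inl i
def yv {n : ℕ} (i : Fin n) : Vtx n := Sum.inr i

/-- Condition (∗): X is a minimal vertex cover, Y is a maximal independent set,
and `x_i y_i` is an edge for every `i`. -/
def StarCond {n : ℕ} (G : SimpleGraph (Vtx n)) : Prop :=
  IsMinVC G (Set.range xv) ∧ IsMaxIndep G (Set.range yv) ∧ ∀ i, G.Adj (xv i) (yv i)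

/-- Condition (∗∗): `x_i y_j ∈ E(G)` implies `i ≤ j`. -/
def StarStarCond {n : ℕ} (G : SimpleGraph (Vtx n)) : Prop :=
  ∀ i j : Fin n, G.Adj (xv i) (yv j) → i ≤ j

/-- Condition (i): for distinct `i,j,k` and `z_i ∈ {x_i,y_i}`, if `z_i x_j` and `y_j x_k`
are edges then so is `z_i x_k`. -/
def CondI {n : ℕ} (G : SimpleGraph (Vtx n)) : Prop :=
  ∀ i j k : Fin n, i ≠ j → j ≠ k → i ≠ k →
    ∀ z ∈ ({xv i, yv i} : Set (Vtx n)),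
      G.Adj z (xv j) → G.Adj (yv j) (xv k) → G.Adj z (xv k)

/-- Condition (ii): `x_i y_j ∈ E(G)` implies `x_i x_j ∉ E(G)`. -/
def CondII {n : ℕ} (G : SimpleGraph (Vtx n)) : Prop :=
  ∀ i j : Fin n, G.Adj (xv i) (yv j) → ¬ G.Adj (xv i) (xv j)

/-- The minimum vertex cover size of `G` (the height of the edge ideal) is at least `n`. -/
def HeightN {n : ℕ} (G : SimpleGraph (Vtx n)) : Prop :=
  ∀ C : Finset (Vtx n), IsVC G ↑C → n ≤ C.card

/-- Directed edge `i → j` of the semidirected graph `𝔡_G`. -/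
def dirEdge {n : ℕ} (G : SimpleGraph (Vtx n)) (i j : Fin n) : Prop :=
  i ≠ j ∧ G.Adj (xv i) (yv j)

/-- Undirected edge `ij` of the semidirected graph `𝔡_G`. -/
def undirEdge {n : ℕ} (G : SimpleGraph (Vtx n)) (i j : Fin n) : Prop :=
  G.Adj (xv i) (xv j)

/-- Claim 1 in Theorem 3.1. Let `G` be a Cohen-Macaulay very well-covered
graph with `2n` vertices satisfying (∗) and (∗∗), with `deg(y_1) = 1` and `x_1 y_1 ∈ E(G)`.
If `x_t ∈ N_G(x_1)`, then `y_t` is isolated in `G \ ({x_1} ∪ N_G(x_1))`. -/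
theorem claim1_yt_isolated {n : ℕ} (hn : 0 < n) (G : SimpleGraph (Vtx n))
    (hiso : NoIsolated G) (hht : HeightN G) (hstar : StarCond G)
    (hss : StarStarCond G) (h1 : CondI G) (h2 : CondII G)
    (hdeg : ∀ v, G.Adj (yv ⟨0, hn⟩) v → v = xv ⟨0, hn⟩)
    (hx1y1 : G.Adj (xv ⟨0, hn⟩) (yv ⟨0, hn⟩))
    (t : Fin n) (ht : G.Adj (xv ⟨0, hn⟩) (xv t)) :
    yv t ∉ ({xv ⟨0, hn⟩} ∪ G.neighborSet (xv ⟨0, hn⟩) : Set (Vtx n)) ∧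
    ∀ v, G.Adj (yv t) v → v ∈ ({xv ⟨0, hn⟩} ∪ G.neighborSet (xv ⟨0, hn⟩) : Set (Vtx n)) := by
  obtain ⟨hX, hY, hdiag⟩ := hstar
  constructor
  · rintro (h | h)
    · simp [xv, yv] at h
    · exact h2 ⟨0, hn⟩ t h ht
  · intro v hv
    match v with
    | Sum.inr j =>
        exact absurd hv (hY.1 _ ⟨t, rfl⟩ _ ⟨j, rfl⟩)
    | Sum.inl j =>
        by_cases hj0 : j = ⟨0, hn⟩
        · subst hj0; exact Or.inl rfl
        · right
          have h0t : (⟨0, hn⟩ : Fin n) ≠ t := fun h => G.irrefl (h ▸ ht)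
          by_cases hjt : j = t
          · subst hjt; exact ht
          · exact h1 ⟨0, hn⟩ t j h0t (Ne.symm hjt) (Ne.symm hj0)
              (xv ⟨0, hn⟩) (Or.inl rfl) ht hv
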